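/- Let G be a simple graph on a countably infinite vertex set that is disconnected (its vertex set is nonempty and G is not connected). Then G is ME-homogeneous if and only if there exists m, either a positive natural number or ℵ₀, such that G is isomorphic to the disjoint union of countably infinitely many complete graphs each on m vertices. -/

import Mathlib

open Classical in
/-- Extend `f` by mapping `a` to `b`. -/
noncomputable def extendBy {V : Type} (f : V → V) (a b : V) : V → V :=
  Function.update f a b

section Defs

variable {V : Type}

/-- `f` is a graph homomorphism on the finite induced subgraph on `A`. -/
def IsHomOn (G : SimpleGraph V) (A : Finset V) (f : V → V) : Prop :=
  ∀ ⦃u v : V⦄, u ∈ A → v ∈ A → G.Adj u v → G.Adj (f u) (f v)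

/-- `f` is an injective graph homomorphism (monomorphism) on `A`. -/
def IsMonOn (G : SimpleGraph V) (A : Finset V) (f : V → V) : Prop :=
  IsHomOn G A f ∧ Set.InjOn f (↑A : Set V)

/-- `f` is an isomorphism of the induced subgraph on `A` onto its image. -/
def IsIsoOn (G : SimpleGraph V) (A : Finset V) (f : V → V) : Prop :=
  Set.InjOn f (↑A : Set V) ∧
    ∀ ⦃u v : V⦄, u ∈ A → v ∈ A → (G.Adj u v ↔ G.Adj (f u) (f v))

/-- `F` is a graph homomorphism `G → G`. -/
def IsHomEndo (G : SimpleGraph V) (F : V → V) : Prop :=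
  ∀ ⦃u v : V⦄, G.Adj u v → G.Adj (F u) (F v)

/-- `F` is an injective graph homomorphism `G → G`. -/
def IsMonEndo (G : SimpleGraph V) (F : V → V) : Prop :=
  IsHomEndo G F ∧ Function.Injective F

/-- `F` is a self-embedding of `G`. -/
def IsEmbEndo (G : SimpleGraph V) (F : V → V) : Prop :=
  Function.Injective F ∧ ∀ u v : V, G.Adj u v ↔ G.Adj (F u) (F v)

/-- `F` is a surjective graph homomorphism `G → G`. -/
def IsEpiEndo (G : SimpleGraph V) (F : V → V) : Prop :=
  IsHomEndo G F ∧ Function.Surjective F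

/-- `F` is a bijective graph homomorphism `G → G`. -/
def IsBiEndo (G : SimpleGraph V) (F : V → V) : Prop :=
  IsHomEndo G F ∧ Function.Bijective F

/-- `F` is an automorphism of `G`. -/
def IsAutEndo (G : SimpleGraph V) (F : V → V) : Prop :=
  Function.Bijective F ∧ ∀ u v : V, G.Adj u v ↔ G.Adj (F u) (F v)

def IsHHHom (G : SimpleGraph V) : Prop :=
  ∀ (A : Finset V) (f : V → V), IsHomOn G A f →
    ∃ F : V → V, IsHomEndo G F ∧ ∀ a ∈ A, F a = f a

def IsHMHom (G : SimpleGraph V) : Prop :=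
  ∀ (A : Finset V) (f : V → V), IsHomOn G A f →
    ∃ F : V → V, IsMonEndo G F ∧ ∀ a ∈ A, F a = f a

def IsHIHom (G : SimpleGraph V) : Prop :=
  ∀ (A : Finset V) (f : V → V), IsHomOn G A f →
    ∃ F : V → V, IsEmbEndo G F ∧ ∀ a ∈ A, F a = f a

def IsHEHom (G : SimpleGraph V) : Prop :=
  ∀ (A : Finset V) (f : V → V), IsHomOn G A f →
    ∃ F : V → V, IsEpiEndo G F ∧ ∀ a ∈ A, F a = f a

def IsHBHom (G : SimpleGraph V) : Prop :=
  ∀ (A : Finset V) (f : V → V), IsHomOn G A f →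
    ∃ F : V → V, IsBiEndo G F ∧ ∀ a ∈ A, F a = f a

def IsHAHom (G : SimpleGraph V) : Prop :=
  ∀ (A : Finset V) (f : V → V), IsHomOn G A f →
    ∃ F : V → V, IsAutEndo G F ∧ ∀ a ∈ A, F a = f a

def IsMHHom (G : SimpleGraph V) : Prop :=
  ∀ (A : Finset V) (f : V → V), IsMonOn G A f →
    ∃ F : V → V, IsHomEndo G F ∧ ∀ a ∈ A, F a = f a

def IsMMHom (G : SimpleGraph V) : Prop :=
  ∀ (A : Finset V) (f : V → V), IsMonOn G A f →
    ∃ F : V → V, IsMonEndo G F ∧ ∀ a ∈ A, F a = f a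

def IsMIHom (G : SimpleGraph V) : Prop :=
  ∀ (A : Finset V) (f : V → V), IsMonOn G A f →
    ∃ F : V → V, IsEmbEndo G F ∧ ∀ a ∈ A, F a = f a

def IsMEHom (G : SimpleGraph V) : Prop :=
  ∀ (A : Finset V) (f : V → V), IsMonOn G A f →
    ∃ F : V → V, IsEpiEndo G F ∧ ∀ a ∈ A, F a = f a

def IsMBHom (G : SimpleGraph V) : Prop :=
  ∀ (A : Finset V) (f : V → V), IsMonOn G A f →
    ∃ F : V → V, IsBiEndo G F ∧ ∀ a ∈ A, F a = f a

def IsMAHom (G : SimpleGraph V) : Prop :=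
  ∀ (A : Finset V) (f : V → V), IsMonOn G A f →
    ∃ F : V → V, IsAutEndo G F ∧ ∀ a ∈ A, F a = f a

def IsIHHom (G : SimpleGraph V) : Prop :=
  ∀ (A : Finset V) (f : V → V), IsIsoOn G A f →
    ∃ F : V → V, IsHomEndo G F ∧ ∀ a ∈ A, F a = f a

def IsIEHom (G : SimpleGraph V) : Prop :=
  ∀ (A : Finset V) (f : V → V), IsIsoOn G A f →
    ∃ F : V → V, IsEpiEndo G F ∧ ∀ a ∈ A, F a = f a

/-- A cone over a finite set `S`: a vertex outside `S` adjacent to every vertex of `S`. -/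
def IsCone (G : SimpleGraph V) (S : Finset V) (v : V) : Prop :=
  v ∉ S ∧ ∀ s ∈ S, G.Adj v s

/-- A co-cone over a finite set `S`: a vertex outside `S` adjacent to no vertex of `S`. -/
def IsCoCone (G : SimpleGraph V) (S : Finset V) (v : V) : Prop :=
  v ∉ S ∧ ∀ s ∈ S, ¬ G.Adj v s

def HasCoCone (G : SimpleGraph V) (S : Finset V) : Prop :=
  ∃ v : V, IsCoCone G S v

open Classical in
/-- Property (†): every finite surjective homomorphism, and vertex `b` outside its image,
admits a preimage `a` outside the domain such that `f ∪ {(a,b)}` is a homomorphism. -/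
def PropDagger (G : SimpleGraph V) : Prop :=
  ∀ (A : Finset V) (f : V → V), IsHomOn G A f →
    ∀ b : V, b ∉ f '' (↑A : Set V) →
      ∃ a : V, a ∉ A ∧ IsHomOn G (insert a A) (extendBy f a b)

open Classical in
/-- Property (*): every finite surjective monomorphism, and vertex `c` outside its domain,
admits an image `d` outside the codomain such that `f ∪ {(c,d)}` is a homomorphism. -/
def PropStar (G : SimpleGraph V) : Prop :=
  ∀ (A : Finset V) (f : V → V), IsMonOn G A f →
    ∀ c : V, c ∉ A →
      ∃ d : V, d ∉ f '' (↑A : Set V) ∧ IsHomOn G (insert c A) (extendBy f c d)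

/-- The disjoint union of `ι`-many complete graphs, each with vertex set `κ`. -/
def cliqueSum (ι κ : Type) : SimpleGraph (ι × κ) :=
  SimpleGraph.fromRel (fun p q => p.1 = q.1)

end Defs



lemma exists_perm_extend {κ : Type} [Countable κ] (S : Finset κ) (g : κ → κ)
    (hg : Set.InjOn g ↑S) : ∃ e : κ ≃ κ, ∀ x ∈ S, e x = g x := by
  classical
  set S' : Finset κ := S.image g with hS'
  have hcoe : (↑S' : Set κ) = g '' ↑S := Finset.coe_image
  have hbij : Set.BijOn g ↑S ↑S' := hcoe ▸ hg.bijOn_image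
  have hcompl : Nonempty ((↑(↑S : Set κ)ᶜ : Type) ≃ (↑(↑S' : Set κ)ᶜ : Type)) := by
    rw [← Cardinal.eq]
    cases finite_or_infinite κ with
    | inl hfin =>
      haveI := Fintype.ofFinite κ
      have h1 : (↑S : Set κ).ncard + ((↑S : Set κ)ᶜ).ncard = Nat.card κ :=
        Set.ncard_add_ncard_compl _
      have h2 : (↑S' : Set κ).ncard + ((↑S' : Set κ)ᶜ).ncard = Nat.card κ :=
        Set.ncard_add_ncard_compl _
      have hc : (↑S : Set κ).ncard = (↑S' : Set κ).ncard := by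
        rw [Set.ncard_coe_finset, Set.ncard_coe_finset, hS',
          Finset.card_image_of_injOn hg]
      have h3 : ((↑S : Set κ)ᶜ).ncard = ((↑S' : Set κ)ᶜ).ncard := by omega
      rw [← Nat.card_coe_set_eq, ← Nat.card_coe_set_eq,
        Nat.card_eq_fintype_card, Nat.card_eq_fintype_card] at h3
      rw [Cardinal.mk_fintype, Cardinal.mk_fintype, h3]
    | inr hinf =>
      have h1 : ((↑S : Set κ)ᶜ).Infinite := (S.finite_toSet).infinite_compl
      have h2 : ((↑S' : Set κ)ᶜ).Infinite := (S'.finite_toSet).infinite_compl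
      haveI i1 : Infinite (↑(↑S : Set κ)ᶜ : Type) := h1.to_subtype
      haveI i2 : Infinite (↑(↑S' : Set κ)ᶜ : Type) := h2.to_subtype
      rw [Cardinal.mk_eq_aleph0, Cardinal.mk_eq_aleph0]
  obtain ⟨ec⟩ := hcompl
  refine ⟨((Equiv.Set.sumCompl (↑S : Set κ)).symm.trans
      ((hbij.equiv g).sumCongr ec)).trans (Equiv.Set.sumCompl (↑S' : Set κ)),
    fun x hx => ?_⟩
  simp only [Equiv.trans_apply]
  rw [Equiv.Set.sumCompl_symm_apply_of_mem (show x ∈ (↑S : Set κ) from hx)]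
  simp only [Equiv.sumCongr_apply, Sum.map_inl, Equiv.Set.sumCompl_apply_inl]
  rfl

lemma cliqueSum_adj {ι κ : Type} {p q : ι × κ} :
    (cliqueSum ι κ).Adj p q ↔ p ≠ q ∧ p.1 = q.1 := by
  simp only [cliqueSum, SimpleGraph.fromRel_adj]
  constructor
  · rintro ⟨h1, (h2 | h2)⟩
    · exact ⟨h1, h2⟩
    · exact ⟨h1, h2.symm⟩
  · rintro ⟨h1, h2⟩; exact ⟨h1, Or.inl h2⟩

lemma isMEHom_cliqueSum (κ : Type) [Countable κ] : IsMEHom (cliqueSum ℕ κ) := by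
  classical
  intro A f hf
  obtain ⟨hhom, hinj⟩ := hf
  set T : Finset ℕ := A.image Prod.fst with hT
  have key : ∀ i : ℕ, ∃ (t : ℕ) (e : κ ≃ κ),
      ∀ x : κ, (i, x) ∈ A → f (i, x) = (t, e x) := by
    intro i
    by_cases hi : ∃ x : κ, (i, x) ∈ A
    · obtain ⟨x₀, hx₀⟩ := hi
      set t := (f (i, x₀)).1 with ht
      have hfst : ∀ x : κ, (i, x) ∈ A → (f (i, x)).1 = t := by
        intro x hx
        by_cases hxx : x = x₀
        · rw [hxx]
        · have hadj : (cliqueSum ℕ κ).Adj (i, x) (i, x₀) :=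
            cliqueSum_adj.mpr ⟨fun h => hxx (congrArg Prod.snd h), rfl⟩
          exact (cliqueSum_adj.mp (hhom hx hx₀ hadj)).2
      set S : Finset κ := (A.filter (fun p => p.1 = i)).image Prod.snd with hS
      have hmemS : ∀ x : κ, x ∈ S ↔ (i, x) ∈ A := by
        intro x
        simp only [hS, Finset.mem_image, Finset.mem_filter]
        constructor
        · rintro ⟨⟨j, y⟩, ⟨hp, h1⟩, h2⟩
          simp only at h1 h2
          rw [← h1, ← h2]; exact hp
        · intro hx; exact ⟨(i, x), ⟨hx, rfl⟩, rfl⟩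
      set g : κ → κ := fun x => if (i, x) ∈ A then (f (i, x)).2 else x with hgdef
      have hginj : Set.InjOn g ↑S := by
        intro x hx y hy hxy
        have hx' : (i, x) ∈ A := (hmemS x).mp hx
        have hy' : (i, y) ∈ A := (hmemS y).mp hy
        have hgx : g x = (f (i, x)).2 := if_pos hx'
        have hgy : g y = (f (i, y)).2 := if_pos hy'
        have : f (i, x) = f (i, y) := by
          have := hfst x hx'
          have := hfst y hy'
          apply Prod.ext <;> simp_all
        have := hinj hx' hy' this
        exact congrArg Prod.snd this
      obtain ⟨e, he⟩ := exists_perm_extend S g hginj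
      refine ⟨t, e, fun x hx => ?_⟩
      have h1 := he x ((hmemS x).mpr hx)
      have h2 : g x = (f (i, x)).2 := if_pos hx
      apply Prod.ext
      · exact hfst x hx
      · rw [h1, h2]
    · exact ⟨0, Equiv.refl κ, fun x hx => absurd ⟨x, hx⟩ hi⟩
  choose t e he using key
  have hTc : Infinite ({ j : ℕ // j ∉ T } : Type) := by
    have : ((↑T : Set ℕ)ᶜ).Infinite := T.finite_toSet.infinite_compl
    exact this.to_subtype
  obtain ⟨στ⟩ : Nonempty (({ j : ℕ // j ∉ T } : Type) ≃ ℕ) := nonempty_equiv_of_countable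
  set F : ℕ × κ → ℕ × κ := fun p =>
    if h : p.1 ∈ T then (t p.1, e p.1 p.2) else (στ ⟨p.1, h⟩, p.2) with hF
  refine ⟨F, ⟨?_, ?_⟩, ?_⟩
  · rintro ⟨i, x⟩ ⟨j, y⟩ hadj
    obtain ⟨hne, hfst⟩ := cliqueSum_adj.mp hadj
    simp only at hfst
    subst hfst
    have hsnd : x ≠ y := fun h => hne (by rw [h])
    by_cases hiT : i ∈ T
    · have hFx : F (i, x) = (t i, e i x) := dif_pos hiT
      have hFy : F (i, y) = (t i, e i y) := dif_pos hiT
      rw [hFx, hFy]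
      exact cliqueSum_adj.mpr
        ⟨fun h => hsnd ((e i).injective (congrArg Prod.snd h)), rfl⟩
    · have hFx : F (i, x) = (στ ⟨i, hiT⟩, x) := dif_neg hiT
      have hFy : F (i, y) = (στ ⟨i, hiT⟩, y) := dif_neg hiT
      rw [hFx, hFy]
      exact cliqueSum_adj.mpr ⟨fun h => hsnd (congrArg Prod.snd h), rfl⟩
  · rintro ⟨n, x⟩
    refine ⟨((στ.symm n : { j : ℕ // j ∉ T }).val, x), ?_⟩
    have h := (στ.symm n).2
    have : F ((στ.symm n).val, x) = (στ ⟨(στ.symm n).val, h⟩, x) := dif_neg h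
    rw [this, Subtype.coe_eta, Equiv.apply_symm_apply]
  · rintro ⟨i, x⟩ ha
    have hiT : i ∈ T := Finset.mem_image.mpr ⟨(i, x), ha, rfl⟩
    have : F (i, x) = (t i, e i x) := dif_pos hiT
    rw [this, he i x ha]


lemma isMEHom_of_iso {V W : Type} {G : SimpleGraph V} {H : SimpleGraph W}
    (e : G ≃g H) (h : IsMEHom H) : IsMEHom G := by
  classical
  intro A f hf
  obtain ⟨hhom, hinj⟩ := hf
  set A' : Finset W := A.image e with hA'
  set f' : W → W := fun w => e (f (e.symm w)) with hf'
  have hmem : ∀ w : W, w ∈ A' ↔ e.symm w ∈ A := by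
    intro w
    simp only [hA', Finset.mem_image]
    constructor
    · rintro ⟨a, ha, rfl⟩
      simpa using ha
    · intro hw
      exact ⟨e.symm w, hw, by simp⟩
  have hf'mon : IsMonOn H A' f' := by
    constructor
    · intro u v hu hv hadj
      have hu' : e.symm u ∈ A := (hmem u).mp hu
      have hv' : e.symm v ∈ A := (hmem v).mp hv
      have hadj' : G.Adj (e.symm u) (e.symm v) := by
        rw [← SimpleGraph.Iso.map_adj_iff e]
        simpa using hadj
      have := hhom hu' hv' hadj'
      simpa [hf'] using (SimpleGraph.Iso.map_adj_iff e).mpr this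
    · intro u hu v hv huv
      have hu' : e.symm u ∈ A := (hmem u).mp hu
      have hv' : e.symm v ∈ A := (hmem v).mp hv
      have : f (e.symm u) = f (e.symm v) := e.toEquiv.injective huv
      have := hinj hu' hv' this
      have := congrArg e.toEquiv this
      simpa using this
  obtain ⟨F', ⟨hF'hom, hF'surj⟩, hF'ext⟩ := h A' f' hf'mon
  refine ⟨fun v => e.symm (F' (e v)), ⟨?_, ?_⟩, ?_⟩
  · intro u v hadj
    rw [← SimpleGraph.Iso.map_adj_iff e]
    simp only [RelIso.apply_symm_apply]
    exact hF'hom ((SimpleGraph.Iso.map_adj_iff e).mpr hadj)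
  · intro v
    obtain ⟨w, hw⟩ := hF'surj (e v)
    exact ⟨e.symm w, by simp [hw]⟩
  · intro a ha
    have ha' : (e a : W) ∈ A' := Finset.mem_image.mpr ⟨a, ha, rfl⟩
    show e.symm (F' (e a)) = f a
    rw [hF'ext _ ha']
    simp [hf']


section Forward

variable {V : Type} (G : SimpleGraph V)

lemma reachHom (F : V → V) (hF : IsHomEndo G F) {u v : V} (h : G.Reachable u v) :
    G.Reachable (F u) (F v) :=
  h.map (⟨F, fun {a b} h => hF h⟩ : G →g G)

/-- Claim A: in an ME-homogeneous disconnected graph, every component is a clique. -/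
lemma claimA (hME : IsMEHom G) (hne : Nonempty V) (hdisc : ¬ G.Connected) :
    ∀ u v : V, u ≠ v → G.Reachable u v → G.Adj u v := by
  classical
  have hpre : ¬ G.Preconnected := fun h => hdisc ((G.connected_iff).mpr ⟨h, hne⟩)
  simp only [SimpleGraph.Preconnected, not_forall] at hpre
  obtain ⟨w₁, w₂, hw⟩ := hpre
  have hw12 : w₁ ≠ w₂ := fun h => hw (h ▸ SimpleGraph.Reachable.refl w₁)
  intro u v huv hr
  by_contra hnadj
  set f : V → V := fun x => if x = u then w₁ else w₂ with hf
  have hmon : IsMonOn G {u, v} f := by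
    constructor
    · intro a b ha hb hadj
      exfalso
      simp only [Finset.mem_insert, Finset.mem_singleton] at ha hb
      rcases ha with rfl | rfl <;> rcases hb with rfl | rfl
      · exact G.irrefl hadj
      · exact hnadj hadj
      · exact hnadj hadj.symm
      · exact G.irrefl hadj
    · intro a ha b hb hab
      simp only [Finset.coe_insert, Finset.coe_singleton, Set.mem_insert_iff,
        Set.mem_singleton_iff] at ha hb
      rcases ha with rfl | rfl <;> rcases hb with rfl | rfl
      · rfl
      · exfalso
        simp only [hf, if_pos rfl, if_neg (Ne.symm huv)] at hab
        exact hw12 hab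
      · exfalso
        simp only [hf, if_pos rfl, if_neg (Ne.symm huv)] at hab
        exact hw12 hab.symm
      · rfl
  obtain ⟨F, ⟨hFhom, hFsurj⟩, hFext⟩ := hME {u, v} f hmon
  have h1 : F u = w₁ := by
    rw [hFext u (Finset.mem_insert_self u {v})]
    simp [hf]
  have h2 : F v = w₂ := by
    rw [hFext v (Finset.mem_insert_of_mem (Finset.mem_singleton_self v))]
    simp [hf, Ne.symm huv]
  have := reachHom G F hFhom hr
  rw [h1, h2] at this
  exact hw this

lemma mk_out (c : G.ConnectedComponent) :
    G.connectedComponentMk (Quot.out c) = c := Quot.out_eq c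

/-- The core counting contradiction. -/
lemma coreB (hME : IsMEHom G)
    (hA : ∀ u v : V, u ≠ v → G.Reachable u v → G.Adj u v)
    (c d : G.ConnectedComponent) (hcd : c ≠ d) (hd : (d.supp).Finite)
    (S : Finset V) (hS : ↑S ⊆ c.supp) (hcard : S.card = hd.toFinset.card + 1) :
    False := by
  classical
  set Dfin : Finset V := hd.toFinset with hDfin
  have hmemD : ∀ v : V, v ∈ Dfin ↔ G.connectedComponentMk v = d := by
    intro v
    rw [hDfin, Set.Finite.mem_toFinset, SimpleGraph.ConnectedComponent.mem_supp_iff]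
  have hmemS : ∀ v : V, v ∈ S → G.connectedComponentMk v = c := by
    intro v hv
    exact (SimpleGraph.ConnectedComponent.mem_supp_iff _ _).mp (hS hv)
  have hd₀ : ∃ d₀, d₀ ∈ Dfin := ⟨Quot.out d, (hmemD _).mpr (mk_out G d)⟩
  obtain ⟨d₀, hd₀⟩ := hd₀
  have hx₀ : ∃ x₀, x₀ ∈ S := Finset.card_pos.mp (by omega)
  obtain ⟨x₀, hx₀⟩ := hx₀
  -- an injection from Dfin into S
  have hemb : Nonempty (↥Dfin ↪ ↥S) := by
    rw [Function.Embedding.nonempty_iff_card_le]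
    simp only [Fintype.card_coe]
    omega
  obtain ⟨emb⟩ := hemb
  set j : V → V := fun v => if h : v ∈ Dfin then (emb ⟨v, h⟩ : V) else v with hj
  have hjS : ∀ v ∈ Dfin, j v ∈ S := by
    intro v hv
    simp only [hj, dif_pos hv]
    exact (emb ⟨v, hv⟩).2
  have hjinj : ∀ u ∈ Dfin, ∀ v ∈ Dfin, j u = j v → u = v := by
    intro u hu v hv huv
    simp only [hj, dif_pos hu, dif_pos hv] at huv
    have := emb.injective (Subtype.ext huv)
    exact congrArg Subtype.val this
  have hx₀D : x₀ ∉ Dfin := by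
    intro h
    exact hcd ((hmemS x₀ hx₀).symm.trans ((hmemD x₀).mp h))
  set A : Finset V := insert x₀ Dfin with hA'
  set f : V → V := fun v => if v = x₀ then d₀ else j v with hfdef
  have hmon : IsMonOn G A f := by
    constructor
    · intro u v hu hv hadj
      simp only [hA', Finset.mem_insert] at hu hv
      rcases hu with rfl | hu
      · rcases hv with rfl | hv
        · exact absurd hadj (G.irrefl)
        · exfalso
          apply hcd
          rw [← hmemS u hx₀, ← (hmemD v).mp hv]
          exact SimpleGraph.ConnectedComponent.eq.mpr hadj.reachable
      · rcases hv with rfl | hv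
        · exfalso
          apply hcd
          rw [← hmemS v hx₀, ← (hmemD u).mp hu]
          exact SimpleGraph.ConnectedComponent.eq.mpr hadj.symm.reachable
        · have hune : u ≠ x₀ := fun h => hx₀D (h ▸ hu)
          have hvne : v ≠ x₀ := fun h => hx₀D (h ▸ hv)
          simp only [hfdef, if_neg hune, if_neg hvne]
          apply hA
          · intro h
            exact G.irrefl (hjinj u hu v hv h ▸ hadj)
          · apply SimpleGraph.ConnectedComponent.eq.mp
            rw [hmemS _ (hjS u hu), hmemS _ (hjS v hv)]
    · intro u hu v hv huv
      simp only [hA', Finset.coe_insert, Set.mem_insert_iff, Finset.mem_coe] at hu hv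
      rcases hu with rfl | hu
      · rcases hv with rfl | hv
        · rfl
        · exfalso
          have hvne : v ≠ u := fun h => hx₀D (h ▸ hv)
          simp only [hfdef, if_pos rfl, if_neg hvne] at huv
          apply hcd
          rw [← hmemS _ (hjS v hv), ← (hmemD d₀).mp hd₀, huv]
      · rcases hv with rfl | hv
        · exfalso
          have hune : u ≠ v := fun h => hx₀D (h ▸ hu)
          simp only [hfdef, if_pos rfl, if_neg hune] at huv
          apply hcd
          rw [← hmemS _ (hjS u hu), ← (hmemD d₀).mp hd₀, ← huv]
        · have hune : u ≠ x₀ := fun h => hx₀D (h ▸ hu)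
          have hvne : v ≠ x₀ := fun h => hx₀D (h ▸ hv)
          simp only [hfdef, if_neg hune, if_neg hvne] at huv
          exact hjinj u hu v hv huv
  obtain ⟨F, ⟨hFhom, hFsurj⟩, hFext⟩ := hME A f hmon
  have hFx₀ : F x₀ = d₀ := by
    rw [hFext x₀ (Finset.mem_insert_self _ _)]
    simp [hfdef]
  have hFinj : Set.InjOn F ↑S := by
    intro u hu v hv huv
    by_contra hne'
    have hadj : G.Adj u v := by
      apply hA u v hne'
      apply SimpleGraph.ConnectedComponent.eq.mp
      rw [hmemS u hu, hmemS v hv]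
    exact (hFhom hadj).ne huv
  have hFD : ∀ u ∈ S, F u ∈ Dfin := by
    intro u hu
    have hr : G.Reachable u x₀ := by
      apply SimpleGraph.ConnectedComponent.eq.mp
      rw [hmemS u hu, hmemS x₀ hx₀]
    have hr2 := reachHom G F hFhom hr
    rw [hmemD]
    have h2 := SimpleGraph.ConnectedComponent.eq.mpr hr2
    rw [h2, hFx₀]
    exact (hmemD d₀).mp hd₀
  have hsub : S.image F ⊆ Dfin := by
    intro w hw
    obtain ⟨u, hu, rfl⟩ := Finset.mem_image.mp hw
    exact hFD u hu
  have := Finset.card_le_card hsub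
  rw [Finset.card_image_of_injOn hFinj] at this
  omega

/-- All components have the same cardinality. -/
lemma suppCardEq (hME : IsMEHom G) [Countable V]
    (hA : ∀ u v : V, u ≠ v → G.Reachable u v → G.Adj u v) :
    ∀ c d : G.ConnectedComponent, Cardinal.mk c.supp = Cardinal.mk d.supp := by
  classical
  have hle : ∀ c d : G.ConnectedComponent, Cardinal.mk c.supp ≤ Cardinal.mk d.supp := by
    intro c d
    by_cases hcd : c = d
    · rw [hcd]
    · by_contra hlt
      push_neg at hlt
      have hdfin : d.supp.Finite := by
        rw [← Cardinal.lt_aleph0_iff_set_finite]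
        exact lt_of_lt_of_le hlt (Cardinal.mk_le_aleph0)
      set m := hdfin.toFinset.card with hm
      have hdcard : Cardinal.mk d.supp = (m : Cardinal) := by
        rw [← Set.Finite.coe_toFinset hdfin]
        exact Cardinal.mk_coe_finset
      -- get a subset of c.supp of size m + 1
      have hex : ∃ S : Finset V, ↑S ⊆ c.supp ∧ S.card = m + 1 := by
        by_cases hcfin : c.supp.Finite
        · have h1 : (m : Cardinal) < Cardinal.mk c.supp := hdcard ▸ hlt
          have h2 : Cardinal.mk c.supp = (hcfin.toFinset.card : Cardinal) := by
            conv_lhs => rw [← Set.Finite.coe_toFinset hcfin]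
            exact Cardinal.mk_coe_finset
          rw [h2] at h1
          have h3 : m < hcfin.toFinset.card := by exact_mod_cast h1
          obtain ⟨S, hS1, hS2⟩ := Finset.exists_subset_card_eq (show m + 1 ≤ hcfin.toFinset.card by omega)
          refine ⟨S, ?_, hS2⟩
          intro v hv
          rw [← Set.Finite.mem_toFinset hcfin]
          exact hS1 hv
        · have hcinf : c.supp.Infinite := hcfin
          obtain ⟨S, hS1, hS2⟩ := hcinf.exists_subset_card_eq (m + 1)
          exact ⟨S, hS1, hS2⟩
      obtain ⟨S, hS1, hS2⟩ := hex
      exact coreB G hME hA c d hcd hdfin S hS1 (by rw [← hm]; exact hS2)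
  intro c d
  exact le_antisymm (hle c d) (hle d c)

/-- Claim C: infinitely many components. -/
lemma infiniteComponents [Countable V] [Infinite V] (hME : IsMEHom G)
    (hdisc : ¬ G.Connected) (hne : Nonempty V) :
    Infinite G.ConnectedComponent := by
  classical
  by_contra hfin
  haveI hfin' : Finite G.ConnectedComponent := not_infinite_iff_finite.mp hfin
  haveI := Fintype.ofFinite G.ConnectedComponent
  -- some component is infinite
  have hex : ∃ c₁ : G.ConnectedComponent, c₁.supp.Infinite := by
    by_contra hall
    push_neg at hall
    have huniv : (Set.univ : Set V) ⊆ ⋃ c : G.ConnectedComponent, c.supp := by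
      intro v _
      exact Set.mem_iUnion.mpr ⟨G.connectedComponentMk v, rfl⟩
    have : (Set.univ : Set V).Finite :=
      Set.Finite.subset (Set.finite_iUnion hall) huniv
    exact Set.infinite_univ this
  obtain ⟨c₁, hc₁⟩ := hex
  haveI hCC : Countable G.ConnectedComponent := Quotient.countable
  obtain ⟨ιn, hιn⟩ := (countable_iff_exists_injective G.ConnectedComponent).mp hCC
  set embn : ℕ ↪ ↥c₁.supp := hc₁.natEmbedding _ with hembn
  set ι : G.ConnectedComponent → V := fun c => (embn (ιn c) : V) with hι
  have hιinj : Function.Injective ι := by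
    intro a b hab
    exact hιn (embn.injective (Subtype.ext hab))
  have hιmem : ∀ c, ι c ∈ c₁.supp := fun c => (embn (ιn c)).2
  set A : Finset V := Finset.univ.image (fun c : G.ConnectedComponent => Quot.out c) with hA
  set f : V → V := fun v => ι (G.connectedComponentMk v) with hfdef
  have hmemA : ∀ a : V, a ∈ A → Quot.out (G.connectedComponentMk a) = a := by
    intro a ha
    obtain ⟨ca, _, rfl⟩ := Finset.mem_image.mp ha
    rw [mk_out]
  have houtA : ∀ v : V, Quot.out (G.connectedComponentMk v) ∈ A := by
    intro v
    exact Finset.mem_image.mpr ⟨G.connectedComponentMk v, Finset.mem_univ _, rfl⟩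
  have hmon : IsMonOn G A f := by
    constructor
    · intro a b ha hb hadj
      exfalso
      have h1 : G.connectedComponentMk a = G.connectedComponentMk b :=
        SimpleGraph.ConnectedComponent.eq.mpr hadj.reachable
      have : a = b := by
        rw [← hmemA a ha, ← hmemA b hb, h1]
      exact G.irrefl (this ▸ hadj)
    · intro a ha b hb hab
      simp only [hfdef] at hab
      have h1 := hιinj hab
      rw [← hmemA a ha, ← hmemA b hb, h1]
  obtain ⟨F, ⟨hFhom, hFsurj⟩, hFext⟩ := hME A f hmon
  -- every value of F lies in c₁'s component
  have hrange : ∀ v : V, G.connectedComponentMk (F v) = c₁ := by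
    intro v
    have hr : G.Reachable v (Quot.out (G.connectedComponentMk v)) :=
      SimpleGraph.ConnectedComponent.eq.mp (by rw [mk_out])
    have hr2 := reachHom G F hFhom hr
    have h3 : F (Quot.out (G.connectedComponentMk v)) = ι (G.connectedComponentMk v) := by
      rw [hFext _ (houtA v), hfdef]
      have := hmemA _ (houtA v)
      simp only
      rw [mk_out]
    have h4 := SimpleGraph.ConnectedComponent.eq.mpr hr2
    rw [h4, h3]
    exact (SimpleGraph.ConnectedComponent.mem_supp_iff _ _).mp (hιmem _)
  -- but there is a vertex outside c₁'s component
  have hpre : ¬ G.Preconnected := fun h => hdisc ((G.connected_iff).mpr ⟨h, hne⟩)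
  simp only [SimpleGraph.Preconnected, not_forall] at hpre
  obtain ⟨w₁, w₂, hw⟩ := hpre
  have hww : G.connectedComponentMk w₁ ≠ G.connectedComponentMk w₂ :=
    fun h => hw (SimpleGraph.ConnectedComponent.eq.mp h)
  have hz : ∃ z : V, G.connectedComponentMk z ≠ c₁ := by
    by_cases h1 : G.connectedComponentMk w₁ = c₁
    · exact ⟨w₂, fun h => hww (h1.trans h.symm)⟩
    · exact ⟨w₁, h1⟩
  obtain ⟨z, hz⟩ := hz
  obtain ⟨v, hv⟩ := hFsurj z
  exact hz (hv ▸ hrange v)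

lemma cliqueSum_adj' {ι κ : Type} {p q : ι × κ} :
    (cliqueSum ι κ).Adj p q ↔ p ≠ q ∧ p.1 = q.1 := by
  simp only [cliqueSum, SimpleGraph.fromRel_adj]
  constructor
  · rintro ⟨h1, (h2 | h2)⟩
    · exact ⟨h1, h2⟩
    · exact ⟨h1, h2.symm⟩
  · rintro ⟨h1, h2⟩; exact ⟨h1, Or.inl h2⟩

lemma forwardDir [Countable V] [Infinite V] (hME : IsMEHom G)
    (hne : Nonempty V) (hdisc : ¬ G.Connected) :
    ∃ m : Cardinal, 0 < m ∧ m ≤ Cardinal.aleph0 ∧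
      ∃ κ : Type, Cardinal.mk κ = m ∧ Nonempty (G ≃g cliqueSum ℕ κ) := by
  classical
  have hA := claimA G hME hne hdisc
  have hcard := suppCardEq G hME hA
  haveI hinfC := infiniteComponents G hME hdisc hne
  haveI hCC : Countable G.ConnectedComponent := Quotient.countable
  obtain ⟨v₀⟩ := hne
  set c₀ : G.ConnectedComponent := G.connectedComponentMk v₀ with hc₀
  set κ : Type := ↥(c₀.supp) with hκ
  haveI : Nonempty κ := ⟨⟨v₀, rfl⟩⟩
  refine ⟨Cardinal.mk κ, ?_, Cardinal.mk_le_aleph0, κ, rfl, ?_⟩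
  · exact lt_of_le_of_ne zero_le (Ne.symm (Cardinal.mk_ne_zero κ))
  · obtain ⟨σ⟩ : Nonempty (G.ConnectedComponent ≃ ℕ) := nonempty_equiv_of_countable
    have hβ : ∀ c : G.ConnectedComponent, Nonempty (↥c.supp ≃ κ) :=
      fun c => Cardinal.eq.mp (hcard c c₀)
    set β : ∀ c : G.ConnectedComponent, ↥c.supp ≃ κ := fun c => (hβ c).some with hβdef
    set toF : V → ℕ × κ := fun v =>
      (σ (G.connectedComponentMk v), β (G.connectedComponentMk v) ⟨v, rfl⟩) with htoF
    have hgen : ∀ (w : V) (c : G.ConnectedComponent) (hw : G.connectedComponentMk w = c),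
        (β (G.connectedComponentMk w) ⟨w, rfl⟩ : κ) = β c ⟨w, hw⟩ := by
      intro w c hw
      subst hw
      rfl
    have hinj : Function.Injective toF := by
      intro u v h
      have h1 : G.connectedComponentMk u = G.connectedComponentMk v :=
        σ.injective (congrArg Prod.fst h)
      have h2 : (β (G.connectedComponentMk u) ⟨u, rfl⟩ : κ) =
          β (G.connectedComponentMk v) ⟨v, rfl⟩ := congrArg Prod.snd h
      rw [hgen u (G.connectedComponentMk v) h1] at h2
      have h3 := (β (G.connectedComponentMk v)).injective h2
      exact congrArg Subtype.val h3
    have hsurj : Function.Surjective toF := by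
      rintro ⟨n, x⟩
      set c : G.ConnectedComponent := σ.symm n with hc
      set v : V := ((β c).symm x : ↥c.supp).val with hv
      have hvc : G.connectedComponentMk v = c :=
        (SimpleGraph.ConnectedComponent.mem_supp_iff _ _).mp ((β c).symm x).2
      refine ⟨v, ?_⟩
      have h1 : σ (G.connectedComponentMk v) = n := by rw [hvc, hc, Equiv.apply_symm_apply]
      have h2 : (β (G.connectedComponentMk v) ⟨v, rfl⟩ : κ) = x := by
        rw [hgen v c hvc]
        have h3 : (⟨v, hvc⟩ : ↥c.supp) = (β c).symm x := Subtype.ext rfl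
        rw [h3, Equiv.apply_symm_apply]
      show (σ (G.connectedComponentMk v), (β (G.connectedComponentMk v) ⟨v, rfl⟩ : κ)) = (n, x)
      rw [h1, h2]
    have hadjiff : ∀ u v : V, (cliqueSum ℕ κ).Adj (toF u) (toF v) ↔ G.Adj u v := by
      intro u v
      rw [cliqueSum_adj']
      constructor
      · rintro ⟨h1, h2⟩
        have huv : u ≠ v := fun h => h1 (by rw [h])
        have hcc : G.connectedComponentMk u = G.connectedComponentMk v := σ.injective h2
        exact hA u v huv (SimpleGraph.ConnectedComponent.eq.mp hcc)
      · intro hadj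
        constructor
        · intro h
          exact G.irrefl (hinj h ▸ hadj)
        · show σ (G.connectedComponentMk u) = σ (G.connectedComponentMk v)
          rw [SimpleGraph.ConnectedComponent.eq.mpr hadj.reachable]
      
    exact ⟨{ toEquiv := Equiv.ofBijective toF ⟨hinj, hsurj⟩,
             map_rel_iff' := fun {a b} => hadjiff a b }⟩

end Forward

/-- A disconnected countably infinite graph is ME-homogeneous iff it is
isomorphic to a disjoint union of countably infinitely many complete graphs each on `m`
vertices, where `m` is a positive natural number or `ℵ₀`. -/
theorem stmt_18 {V : Type} [Countable V] [Infinite V] (G : SimpleGraph V)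
    (hne : Nonempty V) (hdisc : ¬ G.Connected) :
    IsMEHom G ↔
      ∃ m : Cardinal, 0 < m ∧ m ≤ Cardinal.aleph0 ∧
        ∃ κ : Type, Cardinal.mk κ = m ∧ Nonempty (G ≃g cliqueSum ℕ κ) := by
  constructor
  · intro hME
    exact forwardDir G hME hne hdisc
  · rintro ⟨m, hm0, hmle, κ, hκ, ⟨e⟩⟩
    haveI : Countable κ := Cardinal.mk_le_aleph0_iff.mp (hκ ▸ hmle)
    exact isMEHom_of_iso e (isMEHom_cliqueSum κ)
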